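/- Let G be a score-symmetric competitiveness-based ranking game with d ≥ 2 players, n shared actions, prizes u_1,…,u_d ∈ [0,1], and costs in [0,1]. Let ε be the inverse of a positive integer and δ = ε/(4d²·3^d). Let x be a Nash equilibrium of G and let x̃ be a mixed profile such that, for every player i, x̃^i is a δ-rounding of x^i: every entry x̃^i_j is a non-negative integer multiple of δ, |Σ_{l=1}^{j} (x̃^i_l − x^i_l)| < δ for every j, and x̃^i_j = x^i_j whenever x^i_j is itself an integer multiple of δ (in particular x̃^i_j = 0 whenever x^i_j = 0). Then x̃ is an ε-approximately well-supported Nash equilibrium of G. -/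

import Mathlib

open Finset
open scoped Classical

/-- Prize share of player `i` in the pure profile `s` of a score-symmetric
competitiveness-based ranking game with shared scores `score` and prizes `u`
(0-indexed: `u ⟨0⟩` is the first prize): if `w` players have strictly higher
score and `t` players (including `i`) are tied with `i`, the tied players
equally share the prizes for positions `w+1, …, w+t`. -/
noncomputable def shareSS (d n : ℕ) (score : Fin n → ℝ) (u : Fin d → ℝ)
    (s : Fin d → Fin n) (i : Fin d) : ℝ :=
  (∑ l : Fin d,
      if (Finset.univ.filter fun k => score (s i) < score (s k)).card ≤ (l : ℕ) ∧
          (l : ℕ) < (Finset.univ.filter fun k => score (s i) < score (s k)).card +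
            (Finset.univ.filter fun k => score (s k) = score (s i)).card
      then u l else 0) /
    (((Finset.univ.filter fun k => score (s k) = score (s i)).card : ℕ) : ℝ)

/-- Expected payoff `π_j^i(x)` of player `i` from playing the pure strategy
`a_j` when every other player `k` plays his mixed strategy `x k`: the
expectation of his prize share minus the cost `c i j`. -/
noncomputable def piSS (d n : ℕ) (score : Fin n → ℝ) (u : Fin d → ℝ)
    (c : Fin d → Fin n → ℝ) (x : Fin d → Fin n → ℝ) (i : Fin d) (j : Fin n) : ℝ :=
  ∑ s : Fin d → Fin n,
    if s i = j then
      (∏ k ∈ Finset.univ.erase i, x k (s k)) * (shareSS d n score u s i - c i j)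
    else 0

open Finset
open scoped Classical

/-- zone of action `l` relative to `j`: 0 below, 1 equal, 2 above. -/
def zoneOf (n : ℕ) (j l : Fin n) : Fin 3 := if l < j then 0 else if l = j then 1 else 2

lemma zoneOf_eq_two {n : ℕ} {j l : Fin n} : zoneOf n j l = 2 ↔ j < l := by
  unfold zoneOf
  split_ifs with h1 h2
  · exact iff_of_false (by decide) fun h => absurd (h1.trans h) (lt_irrefl _)
  · exact iff_of_false (by decide) (by rw [h2]; exact lt_irrefl _)
  · exact iff_of_true rfl (lt_of_le_of_ne (not_lt.mp h1) (Ne.symm h2))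

lemma zoneOf_eq_one {n : ℕ} {j l : Fin n} : zoneOf n j l = 1 ↔ l = j := by
  unfold zoneOf
  split_ifs with h1 h2
  · exact iff_of_false (by decide) fun h => absurd (h ▸ h1) (lt_irrefl _)
  · exact iff_of_true rfl h2
  · exact iff_of_false (by decide) h2

lemma zoneOf_eq_zero {n : ℕ} {j l : Fin n} : zoneOf n j l = 0 ↔ l < j := by
  unfold zoneOf
  split_ifs with h1 h2
  · exact iff_of_true rfl h1
  · exact iff_of_false (by decide) (h2 ▸ h1)
  · exact iff_of_false (by decide) h1

/-- share determined by the configuration of zones. -/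
noncomputable def ShareT (d : ℕ) (u : Fin d → ℝ) (t : Fin d → Fin 3) : ℝ :=
  (∑ l : Fin d,
      if (Finset.univ.filter fun k => t k = 2).card ≤ (l : ℕ) ∧
          (l : ℕ) < (Finset.univ.filter fun k => t k = 2).card +
            (Finset.univ.filter fun k => t k = 1).card
      then u l else 0) /
    (((Finset.univ.filter fun k => t k = 1).card : ℕ) : ℝ)

lemma shareSS_eq_ShareT (d n : ℕ) (score : Fin n → ℝ) (hscore : StrictMono score)
    (u : Fin d → ℝ) (s : Fin d → Fin n) (i : Fin d) (j : Fin n) (hsi : s i = j) :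
    shareSS d n score u s i = ShareT d u (fun k => zoneOf n j (s k)) := by
  unfold shareSS ShareT
  have h2 : (Finset.univ.filter fun k => score (s i) < score (s k)) =
      (Finset.univ.filter fun k => zoneOf n j (s k) = 2) := by
    apply Finset.filter_congr
    intro k _
    rw [hsi, zoneOf_eq_two, hscore.lt_iff_lt]
  have h1 : (Finset.univ.filter fun k => score (s k) = score (s i)) =
      (Finset.univ.filter fun k => zoneOf n j (s k) = 1) := by
    apply Finset.filter_congr
    intro k _
    rw [hsi, zoneOf_eq_one, hscore.injective.eq_iff]
  rw [h1, h2]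

set_option maxHeartbeats 1000000 in
lemma piSS_config (d n : ℕ) (score : Fin n → ℝ) (hscore : StrictMono score)
    (u : Fin d → ℝ) (c : Fin d → Fin n → ℝ) (x : Fin d → Fin n → ℝ)
    (i : Fin d) (j : Fin n) :
    piSS d n score u c x i j =
      ∑ t : Fin d → Fin 3,
        if t i = 1 then
          (∏ k ∈ Finset.univ.erase i,
              ∑ l ∈ Finset.univ.filter fun l => zoneOf n j l = t k, x k l) *
            (ShareT d u t - c i j)
        else 0 := by
  have hzj : zoneOf n j j = 1 := zoneOf_eq_one.mpr rfl
  unfold piSS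
  rw [← Finset.sum_filter]
  have hrw : ∀ s ∈ Finset.univ.filter fun s : Fin d → Fin n => s i = j,
      (∏ k ∈ Finset.univ.erase i, x k (s k)) * (shareSS d n score u s i - c i j) =
      (∏ k ∈ Finset.univ.erase i, x k (s k)) *
        (ShareT d u (fun k => zoneOf n j (s k)) - c i j) := by
    intro s hs
    rw [Finset.mem_filter] at hs
    rw [shareSS_eq_ShareT d n score hscore u s i j hs.2]
  rw [Finset.sum_congr rfl hrw]
  rw [← Finset.sum_fiberwise (Finset.univ.filter fun s : Fin d → Fin n => s i = j)
      (fun s => (fun k => zoneOf n j (s k)))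
      (fun s => (∏ k ∈ Finset.univ.erase i, x k (s k)) *
        (ShareT d u (fun k => zoneOf n j (s k)) - c i j))]
  apply Finset.sum_congr rfl
  intro t _
  by_cases hti : t i = 1
  · rw [if_pos hti]
    have hfib : ((Finset.univ.filter fun s : Fin d → Fin n => s i = j).filter
        fun s => (fun k => zoneOf n j (s k)) = t) =
        Fintype.piFinset (fun k => if k = i then ({j} : Finset (Fin n))
          else Finset.univ.filter fun l => zoneOf n j l = t k) := by
      ext s
      simp only [Finset.mem_filter, Finset.mem_univ, true_and, Fintype.mem_piFinset,
        funext_iff]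
      constructor
      · rintro ⟨hsij, hz⟩ k
        by_cases hk : k = i
        · subst hk; simp [hsij]
        · simp [hk, hz k]
      · intro h
        have hsij : s i = j := by have := h i; simpa using this
        refine ⟨hsij, fun k => ?_⟩
        by_cases hk : k = i
        · subst hk; rw [hsij, hzj, hti]
        · have := h k; simp [hk] at this; exact this
    rw [hfib]
    have hconst : ∀ s ∈ Fintype.piFinset (fun k => if k = i then ({j} : Finset (Fin n))
        else Finset.univ.filter fun l => zoneOf n j l = t k),
        (∏ k ∈ Finset.univ.erase i, x k (s k)) *
          (ShareT d u (fun k => zoneOf n j (s k)) - c i j) =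
        (∏ k : Fin d, if k = i then (1:ℝ) else x k (s k)) * (ShareT d u t - c i j) := by
      intro s hs
      rw [Fintype.mem_piFinset] at hs
      have hsij : s i = j := by have := hs i; simpa using this
      have hz : (fun k => zoneOf n j (s k)) = t := by
        funext k
        by_cases hk : k = i
        · subst hk; rw [hsij, hzj, hti]
        · have := hs k; simp [hk] at this; exact this
      rw [hz]
      congr 1
      rw [← Finset.mul_prod_erase Finset.univ _ (Finset.mem_univ i), if_pos rfl, one_mul]
      apply Finset.prod_congr rfl
      intro k hk
      rw [if_neg (Finset.ne_of_mem_erase hk)]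
    rw [Finset.sum_congr rfl hconst, ← Finset.sum_mul]
    congr 1
    have hexp : (∑ s ∈ Fintype.piFinset (fun k => if k = i then ({j} : Finset (Fin n))
          else Finset.univ.filter fun l => zoneOf n j l = t k),
        ∏ k : Fin d, if k = i then (1:ℝ) else x k (s k)) =
        ∏ k : Fin d, ∑ l ∈ (if k = i then ({j} : Finset (Fin n))
          else Finset.univ.filter fun l => zoneOf n j l = t k),
          (if k = i then (1:ℝ) else x k l) :=
      (Finset.prod_univ_sum
        (fun k => if k = i then ({j} : Finset (Fin n))
          else Finset.univ.filter fun l => zoneOf n j l = t k)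
        (fun k l => if k = i then (1:ℝ) else x k l)).symm
    rw [hexp]
    rw [← Finset.mul_prod_erase Finset.univ _ (Finset.mem_univ i)]
    simp only [eq_self_iff_true, if_true, Finset.sum_const, Finset.card_singleton,
      one_smul, one_mul]
    apply Finset.prod_congr rfl
    intro k hk
    have hk' := Finset.ne_of_mem_erase hk
    simp only [if_neg hk']
  · rw [if_neg hti]
    apply Finset.sum_eq_zero
    intro s hs
    exfalso
    rw [Finset.mem_filter, Finset.mem_filter] at hs
    apply hti
    rw [← congrFun hs.2 i, hs.1.2, hzj]

lemma abs_prod_sub_prod_le {α : Type*} (s : Finset α) (f g : α → ℝ)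
    (hf : ∀ a ∈ s, 0 ≤ f a ∧ f a ≤ 1) (hg : ∀ a ∈ s, 0 ≤ g a ∧ g a ≤ 1) :
    |∏ a ∈ s, f a - ∏ a ∈ s, g a| ≤ ∑ a ∈ s, |f a - g a| := by
  induction s using Finset.cons_induction with
  | empty => simp
  | cons a s ha ih =>
    rw [Finset.prod_cons, Finset.prod_cons, Finset.sum_cons]
    have hfs : ∀ b ∈ s, 0 ≤ f b ∧ f b ≤ 1 := fun b hb => hf b (Finset.mem_cons_of_mem hb)
    have hgs : ∀ b ∈ s, 0 ≤ g b ∧ g b ≤ 1 := fun b hb => hg b (Finset.mem_cons_of_mem hb)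
    have hPf0 : 0 ≤ ∏ b ∈ s, f b := Finset.prod_nonneg fun b hb => (hfs b hb).1
    have hPf1 : ∏ b ∈ s, f b ≤ 1 := Finset.prod_le_one (fun b hb => (hfs b hb).1)
      (fun b hb => (hfs b hb).2)
    have hga := hg a (Finset.mem_cons_self a s)
    have key : f a * ∏ b ∈ s, f b - g a * ∏ b ∈ s, g b =
        (f a - g a) * ∏ b ∈ s, f b + g a * (∏ b ∈ s, f b - ∏ b ∈ s, g b) := by ring
    rw [key]
    calc |(f a - g a) * ∏ b ∈ s, f b + g a * (∏ b ∈ s, f b - ∏ b ∈ s, g b)|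
        ≤ |(f a - g a) * ∏ b ∈ s, f b| + |g a * (∏ b ∈ s, f b - ∏ b ∈ s, g b)| :=
          abs_add_le _ _
      _ ≤ |f a - g a| * 1 + 1 * |∏ b ∈ s, f b - ∏ b ∈ s, g b| := by
          rw [abs_mul, abs_mul]
          gcongr
          · rw [abs_of_nonneg hPf0]; exact hPf1
          · rw [abs_of_nonneg hga.1]; exact hga.2
      _ ≤ |f a - g a| + ∑ b ∈ s, |f b - g b| := by
          rw [mul_one, one_mul]
          gcongr
          exact ih hfs hgs

lemma ShareT_mem (d : ℕ) (u : Fin d → ℝ) (huI : ∀ l, u l ∈ Set.Icc (0 : ℝ) 1)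
    (t : Fin d → Fin 3) (i : Fin d) (hti : t i = 1) :
    ShareT d u t ∈ Set.Icc (0 : ℝ) 1 := by
  unfold ShareT
  set w := (Finset.univ.filter fun k => t k = 2).card with hw
  set tc := (Finset.univ.filter fun k => t k = 1).card with htc
  have htc1 : 1 ≤ tc := by
    rw [htc]
    exact Finset.card_pos.mpr ⟨i, Finset.mem_filter.mpr ⟨Finset.mem_univ i, hti⟩⟩
  have htcpos : (0:ℝ) < tc := by exact_mod_cast htc1
  have hnum0 : 0 ≤ ∑ l : Fin d, if w ≤ (l:ℕ) ∧ (l:ℕ) < w + tc then u l else 0 := by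
    apply Finset.sum_nonneg
    intro l _
    split_ifs with h
    · exact (huI l).1
    · exact le_refl 0
  constructor
  · exact div_nonneg hnum0 (le_of_lt htcpos)
  · rw [div_le_one htcpos]
    calc (∑ l : Fin d, if w ≤ (l:ℕ) ∧ (l:ℕ) < w + tc then u l else 0)
        ≤ ∑ l : Fin d, if w ≤ (l:ℕ) ∧ (l:ℕ) < w + tc then (1:ℝ) else 0 := by
          apply Finset.sum_le_sum
          intro l _
          split_ifs with h
          · exact (huI l).2
          · exact le_refl 0
      _ = ((Finset.univ.filter fun l : Fin d => w ≤ (l:ℕ) ∧ (l:ℕ) < w + tc).card : ℝ) := by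
          rw [Finset.sum_boole]
      _ ≤ (tc : ℝ) := by
          have hcard : (Finset.univ.filter fun l : Fin d =>
              w ≤ (l:ℕ) ∧ (l:ℕ) < w + tc).card ≤ (Finset.Ico w (w + tc)).card := by
            refine Finset.card_le_card_of_injOn (fun l => (l : ℕ)) ?_ ?_
            · intro l hl
              rw [Finset.mem_coe, Finset.mem_filter] at hl
              rw [Finset.mem_coe, Finset.mem_Ico]
              exact hl.2
            · intro a _ b _ hab
              exact Fin.val_injective hab
          rw [Nat.card_Ico] at hcard
          have : w + tc - w = tc := by omega
          rw [this] at hcard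
          exact_mod_cast hcard
/-- a δ-rounding (δ = ε/(4d²·3^d), ε the inverse of a positive
integer) of a Nash equilibrium of a score-symmetric competitiveness-based
ranking game with prizes and costs in [0,1] is an ε-approximately
well-supported Nash equilibrium. -/
theorem rounded_NE_is_approx_NE (d n : ℕ) (hd : 2 ≤ d)
    (score : Fin n → ℝ) (hscore : StrictMono score)
    (u : Fin d → ℝ) (huI : ∀ l, u l ∈ Set.Icc (0 : ℝ) 1)
    (hu : Antitone u) (hud : u ⟨d - 1, by omega⟩ < u ⟨0, by omega⟩)
    (c : Fin d → Fin n → ℝ) (hc : ∀ i, StrictMono (c i))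
    (hcI : ∀ i j, c i j ∈ Set.Icc (0 : ℝ) 1)
    (ε : ℝ) (hε : ∃ M : ℕ, 0 < M ∧ ε = 1 / (M : ℝ))
    (δ : ℝ) (hδ : δ = ε / (4 * (d : ℝ) ^ 2 * 3 ^ d))
    (x xt : Fin d → Fin n → ℝ)
    (hx0 : ∀ i j, 0 ≤ x i j) (hx1 : ∀ i, ∑ j, x i j = 1)
    (hxt0 : ∀ i j, 0 ≤ xt i j) (hxt1 : ∀ i, ∑ j, xt i j = 1)
    (hNE : ∀ (i : Fin d) (j j' : Fin n),
      piSS d n score u c x i j > piSS d n score u c x i j' → x i j' = 0)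
    (hmult : ∀ (i : Fin d) (j : Fin n), ∃ a : ℕ, xt i j = (a : ℝ) * δ)
    (hclose : ∀ (i : Fin d) (j : Fin n), |∑ l ∈ Finset.Iic j, (xt i l - x i l)| < δ)
    (hpres : ∀ (i : Fin d) (j : Fin n), (∃ a : ℕ, x i j = (a : ℝ) * δ) → xt i j = x i j) :
    ∀ (i : Fin d) (j j' : Fin n),
      piSS d n score u c xt i j > piSS d n score u c xt i j' + ε → xt i j' = 0 := by
  intro i j j' hgt
  obtain ⟨M, hM, hεM⟩ := hε
  have hM0 : (0:ℝ) < M := by exact_mod_cast hM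
  have hε0 : 0 < ε := by rw [hεM]; positivity
  have hd0 : (0:ℝ) < d := by
    have : (2:ℝ) ≤ d := by exact_mod_cast hd
    linarith
  have hδ0 : 0 < δ := by rw [hδ]; positivity
  -- partial sum bounds
  have hIic : ∀ (i₀ : Fin d) (j₀ : Fin n),
      |∑ l ∈ Finset.Iic j₀, (xt i₀ l - x i₀ l)| ≤ δ := fun i₀ j₀ => (hclose i₀ j₀).le
  have hIio : ∀ (i₀ : Fin d) (j₀ : Fin n),
      |∑ l ∈ Finset.Iio j₀, (xt i₀ l - x i₀ l)| ≤ δ := by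
    intro i₀ j₀
    by_cases hj : (j₀ : ℕ) = 0
    · have : Finset.Iio j₀ = ∅ := by
        ext l
        simp only [Finset.mem_Iio, Finset.notMem_empty, iff_false, not_lt]
        rw [Fin.le_def]; omega
      rw [this]; simpa using hδ0.le
    · have hlt : (j₀ : ℕ) - 1 < n := by omega
      have : Finset.Iio j₀ = Finset.Iic ⟨(j₀ : ℕ) - 1, hlt⟩ := by
        ext l
        simp only [Finset.mem_Iio, Finset.mem_Iic]
        rw [Fin.le_def, Fin.lt_def]; simp only []; omega
      rw [this]; exact hIic i₀ _
  have htot : ∀ i₀ : Fin d, ∑ l, (xt i₀ l - x i₀ l) = 0 := by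
    intro i₀; rw [Finset.sum_sub_distrib, hxt1, hx1]; ring
  have hzonesum : ∀ (i₀ : Fin d) (j₀ : Fin n) (m : Fin 3),
      |∑ l ∈ Finset.univ.filter fun l => zoneOf n j₀ l = m, (xt i₀ l - x i₀ l)| ≤ 2 * δ := by
    intro i₀ j₀ m
    fin_cases m
    · show |∑ l ∈ Finset.univ.filter fun l => zoneOf n j₀ l = 0, (xt i₀ l - x i₀ l)| ≤ 2 * δ
      have hz : (Finset.univ.filter fun l => zoneOf n j₀ l = 0) = Finset.Iio j₀ := by
        ext l; simp [zoneOf_eq_zero]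
      rw [hz]
      linarith [hIio i₀ j₀]
    · show |∑ l ∈ Finset.univ.filter fun l => zoneOf n j₀ l = 1, (xt i₀ l - x i₀ l)| ≤ 2 * δ
      have hz : (Finset.univ.filter fun l => zoneOf n j₀ l = 1) = {j₀} := by
        ext l; simp [zoneOf_eq_one]
      rw [hz, Finset.sum_singleton]
      have hins : ∑ l ∈ Finset.Iic j₀, (xt i₀ l - x i₀ l) =
          (xt i₀ j₀ - x i₀ j₀) + ∑ l ∈ Finset.Iio j₀, (xt i₀ l - x i₀ l) := by
        rw [← Finset.Iio_insert, Finset.sum_insert (by simp)]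
      have h1 := hIic i₀ j₀
      have h2 := hIio i₀ j₀
      rw [abs_le] at h1 h2 ⊢
      constructor <;> [linarith [hins]; linarith [hins]]
    · show |∑ l ∈ Finset.univ.filter fun l => zoneOf n j₀ l = 2, (xt i₀ l - x i₀ l)| ≤ 2 * δ
      have hz : (Finset.univ.filter fun l => zoneOf n j₀ l = 2) = Finset.Ioi j₀ := by
        ext l; simp [zoneOf_eq_two]
      rw [hz]
      have hcompl : (Finset.Iic j₀)ᶜ = Finset.Ioi j₀ := by ext l; simp
      have hsplit := Finset.sum_add_sum_compl (Finset.Iic j₀) (fun l => xt i₀ l - x i₀ l)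
      rw [hcompl, htot i₀] at hsplit
      have h1 := hIic i₀ j₀
      rw [abs_le] at h1 ⊢
      constructor <;> linarith
  -- each zone probability lies in [0,1]
  have hPmem : ∀ (y : Fin d → Fin n → ℝ), (∀ a b, 0 ≤ y a b) → (∀ a, ∑ b, y a b = 1) →
      ∀ (k : Fin d) (j₀ : Fin n) (m : Fin 3),
      0 ≤ (∑ l ∈ Finset.univ.filter fun l => zoneOf n j₀ l = m, y k l) ∧
      (∑ l ∈ Finset.univ.filter fun l => zoneOf n j₀ l = m, y k l) ≤ 1 := by
    intro y hy0 hy1 k j₀ m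
    constructor
    · exact Finset.sum_nonneg fun l _ => hy0 k l
    · calc (∑ l ∈ Finset.univ.filter fun l => zoneOf n j₀ l = m, y k l)
          ≤ ∑ l, y k l := Finset.sum_le_sum_of_subset_of_nonneg
            (Finset.filter_subset _ _) (fun l _ _ => hy0 k l)
        _ = 1 := hy1 k
  -- the key approximation bound
  have key : ∀ (i₀ : Fin d) (j₀ : Fin n),
      |piSS d n score u c xt i₀ j₀ - piSS d n score u c x i₀ j₀| ≤ ε / 2 := by
    intro i₀ j₀
    rw [piSS_config d n score hscore u c xt i₀ j₀, piSS_config d n score hscore u c x i₀ j₀,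
      ← Finset.sum_sub_distrib]
    calc |∑ t : Fin d → Fin 3,
          ((if t i₀ = 1 then
            (∏ k ∈ Finset.univ.erase i₀,
                ∑ l ∈ Finset.univ.filter fun l => zoneOf n j₀ l = t k, xt k l) *
              (ShareT d u t - c i₀ j₀) else 0) -
          (if t i₀ = 1 then
            (∏ k ∈ Finset.univ.erase i₀,
                ∑ l ∈ Finset.univ.filter fun l => zoneOf n j₀ l = t k, x k l) *
              (ShareT d u t - c i₀ j₀) else 0))|
        ≤ ∑ t : Fin d → Fin 3, |(if t i₀ = 1 then
            (∏ k ∈ Finset.univ.erase i₀,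
                ∑ l ∈ Finset.univ.filter fun l => zoneOf n j₀ l = t k, xt k l) *
              (ShareT d u t - c i₀ j₀) else 0) -
          (if t i₀ = 1 then
            (∏ k ∈ Finset.univ.erase i₀,
                ∑ l ∈ Finset.univ.filter fun l => zoneOf n j₀ l = t k, x k l) *
              (ShareT d u t - c i₀ j₀) else 0)| := Finset.abs_sum_le_sum_abs _ _
      _ ≤ ∑ _t : Fin d → Fin 3, 2 * (d : ℝ) * δ := by
          apply Finset.sum_le_sum
          intro t _
          by_cases hti : t i₀ = 1
          · rw [if_pos hti, if_pos hti, ← sub_mul, abs_mul]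
            have hS := ShareT_mem d u huI t i₀ hti
            have hcij := hcI i₀ j₀
            have hSc : |ShareT d u t - c i₀ j₀| ≤ 1 := by
              rw [abs_le]
              constructor
              · linarith [hS.1, hcij.2]
              · linarith [hS.2, hcij.1]
            have hprod : |(∏ k ∈ Finset.univ.erase i₀,
                  ∑ l ∈ Finset.univ.filter fun l => zoneOf n j₀ l = t k, xt k l) -
                (∏ k ∈ Finset.univ.erase i₀,
                  ∑ l ∈ Finset.univ.filter fun l => zoneOf n j₀ l = t k, x k l)| ≤
                (d : ℝ) * (2 * δ) := by
              calc _ ≤ ∑ k ∈ Finset.univ.erase i₀,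
                    |(∑ l ∈ Finset.univ.filter fun l => zoneOf n j₀ l = t k, xt k l) -
                     (∑ l ∈ Finset.univ.filter fun l => zoneOf n j₀ l = t k, x k l)| :=
                  abs_prod_sub_prod_le _ _ _
                    (fun k _ => hPmem xt hxt0 hxt1 k j₀ (t k))
                    (fun k _ => hPmem x hx0 hx1 k j₀ (t k))
                _ ≤ ∑ k ∈ Finset.univ.erase i₀, 2 * δ := by
                    apply Finset.sum_le_sum
                    intro k _
                    rw [← Finset.sum_sub_distrib]
                    exact hzonesum k j₀ (t k)
                _ = ((Finset.univ.erase i₀).card : ℝ) * (2 * δ) := by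
                    rw [Finset.sum_const, nsmul_eq_mul]
                _ ≤ (d : ℝ) * (2 * δ) := by
                    have : ((Finset.univ.erase i₀).card : ℝ) ≤ (d : ℝ) := by
                      have := Finset.card_erase_le (s := (Finset.univ : Finset (Fin d))) (a := i₀)
                      have hcu : (Finset.univ : Finset (Fin d)).card = d := by simp
                      exact_mod_cast le_trans this (le_of_eq hcu)
                    nlinarith [hδ0.le]
            calc |(∏ k ∈ Finset.univ.erase i₀,
                  ∑ l ∈ Finset.univ.filter fun l => zoneOf n j₀ l = t k, xt k l) -
                (∏ k ∈ Finset.univ.erase i₀,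
                  ∑ l ∈ Finset.univ.filter fun l => zoneOf n j₀ l = t k, x k l)| *
                |ShareT d u t - c i₀ j₀|
                ≤ ((d : ℝ) * (2 * δ)) * 1 := by
                  apply mul_le_mul hprod hSc (abs_nonneg _)
                  positivity
              _ = 2 * (d : ℝ) * δ := by ring
          · rw [if_neg hti, if_neg hti, sub_zero, abs_zero]
            positivity
      _ = (3 : ℝ) ^ d * (2 * (d : ℝ) * δ) := by
          rw [Finset.sum_const, nsmul_eq_mul]
          congr 1
          have : (Finset.univ : Finset (Fin d → Fin 3)).card = 3 ^ d := by
            rw [Finset.card_univ, Fintype.card_fun]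
            simp
          rw [this]
          push_cast
          ring
      _ ≤ ε / 2 := by
          rw [hδ]
          have h3 : (0:ℝ) < (3:ℝ) ^ d := by positivity
          have heq : (3 : ℝ) ^ d * (2 * (d : ℝ) * (ε / (4 * (d : ℝ) ^ 2 * 3 ^ d))) =
              ε / (2 * (d : ℝ)) := by
            field_simp
            ring
          rw [heq]
          rw [div_le_div_iff₀ (by positivity) (by norm_num)]
          have hd2 : (2:ℝ) ≤ (d:ℝ) := by exact_mod_cast hd
          nlinarith [mul_nonneg hε0.le (by linarith : (0:ℝ) ≤ 2 * (d:ℝ) - 2)]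
  -- conclude
  have h1 := (abs_le.mp (key i j)).2
  have h2 := (abs_le.mp (key i j')).1
  have hx' : x i j' = 0 := hNE i j j' (by linarith)
  have := hpres i j' ⟨0, by simp [hx']⟩
  rw [this, hx']
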